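/- arXiv:1711.10099 — 3 statements merged into one kernel-verified Lean document; each statement's English description precedes it below -/
import Mathlib

section
/- Let Δ₁ be the convex hull of {(1,2),(2,1),(−3,−3)} in ℝ². For every integer k ≥ 1 the average of the lattice points of kΔ₁ differs from the barycenter of kΔ₁: (1/|kΔ₁ ∩ ℤ²|)·Σ_{x ∈ kΔ₁ ∩ ℤ²} x ≠ (1/vol(kΔ₁))·∫_{kΔ₁} x dx (the left-hand side equals (−4k/(9k²+3k+2))·(1,1) while the right-hand side is (0,0)). -/
open MeasureTheory Pointwise

noncomputable section

/-- The lattice points of `ℝ²`: points with integer coordinates. -/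
def lat : Set (ℝ × ℝ) := {x | ∃ m n : ℤ, x = ((m : ℝ), (n : ℝ))}

/-- The moment polytope of `X₁ = ℙ²/(ℤ/9ℤ)` polarized by `-3K`. -/
def Δ₁ : Set (ℝ × ℝ) := convexHull ℝ {((1 : ℝ), (2 : ℝ)), (2, 1), (-3, -3)}

open Finset


lemma gauss (n : ℕ) : (∑ i ∈ range n, (i:ℤ)) * 2 = n * (n-1) := by
  induction n with
  | zero => simp
  | succ n ih => rw [sum_range_succ]; push_cast; push_cast at ih; ring_nf; ring_nf at ih; linarith

lemma sqsum (n : ℕ) : (∑ i ∈ range n, (i:ℤ)^2) * 6 = n * (n-1) * (2*n-1) := by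
  induction n with
  | zero => simp
  | succ n ih => rw [sum_range_succ]; push_cast; push_cast at ih; ring_nf; ring_nf at ih; linarith

lemma quadsum (c : ℕ) (a b d : ℤ) :
    ∑ i ∈ range c, (a + b*i + d*(i:ℤ)^2)
      = a*c + b*(∑ i ∈ range c, (i:ℤ)) + d*(∑ i ∈ range c, (i:ℤ)^2) := by
  rw [sum_add_distrib, sum_add_distrib, sum_const, card_range, ← mul_sum, ← mul_sum]
  push_cast; ring

lemma simplex_one (c : ℕ) : (∑ i ∈ range c, ∑ j ∈ range (c - i), (1:ℤ)) * 2 = c * (c+1) := by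
  have h : ∀ i ∈ range c, (∑ j ∈ range (c - i), (1:ℤ)) = (c:ℤ) + (-1)*i + 0*(i:ℤ)^2 := by
    intro i hi
    rw [sum_const, card_range, nsmul_eq_mul, mul_one]
    push_cast [Nat.cast_sub (mem_range.1 hi).le]; ring
  rw [sum_congr rfl h, quadsum]
  linear_combination (-1 : ℤ) * gauss c

lemma simplex_i (c : ℕ) : (∑ i ∈ range c, ∑ j ∈ range (c - i), (i:ℤ)) * 6 = ((c:ℤ)-1) * c * (c+1) := by
  have h : ∀ i ∈ range c, (∑ j ∈ range (c - i), (i:ℤ)) = 0 + (c:ℤ)*i + (-1)*(i:ℤ)^2 := by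
    intro i hi
    rw [sum_const, card_range, nsmul_eq_mul]
    push_cast [Nat.cast_sub (mem_range.1 hi).le]; ring
  rw [sum_congr rfl h, quadsum]
  linear_combination 3*(c:ℤ)*gauss c - sqsum c

lemma simplex_j (c : ℕ) : (∑ i ∈ range c, ∑ j ∈ range (c - i), (j:ℤ)) * 6 = ((c:ℤ)-1) * c * (c+1) := by
  have h : ∀ i ∈ range c, (∑ j ∈ range (c - i), (j:ℤ)) * 2
      = ((c:ℤ)^2 - c) + (-2*(c:ℤ)+1)*i + 1*(i:ℤ)^2 := by
    intro i hi
    rw [gauss]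
    push_cast [Nat.cast_sub (mem_range.1 hi).le]; ring
  have h2 : (∑ i ∈ range c, ∑ j ∈ range (c - i), (j:ℤ)) * 2
      = ∑ i ∈ range c, ((((c:ℤ)^2 - c) + (-2*(c:ℤ)+1)*i + 1*(i:ℤ)^2)) := by
    rw [sum_mul]; exact sum_congr rfl h
  have h3 := quadsum c ((c:ℤ)^2 - c) (-2*(c:ℤ)+1) 1
  rw [h3] at h2
  have h4 : (∑ i ∈ range c, ∑ j ∈ range (c - i), (j:ℤ)) * 12 = 2*(((c:ℤ)-1) * c * (c+1)) := by
    linear_combination 6*h2 + (-6*(c:ℤ)+3)*gauss c + sqsum c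
  linarith

lemma simplex_lin (c : ℕ) (p q r : ℤ) :
    (∑ i ∈ range c, ∑ j ∈ range (c - i), (p + q*i + r*j)) * 6
      = 3*p*c*(c+1) + (q+r)*((c:ℤ)-1)*c*(c+1) := by
  have h : ∑ i ∈ range c, ∑ j ∈ range (c - i), (p + q*i + r*j)
      = p * (∑ i ∈ range c, ∑ j ∈ range (c - i), (1:ℤ))
        + q * (∑ i ∈ range c, ∑ j ∈ range (c - i), (i:ℤ))
        + r * (∑ i ∈ range c, ∑ j ∈ range (c - i), (j:ℤ)) := by
    rw [mul_sum, mul_sum, mul_sum, ← sum_add_distrib, ← sum_add_distrib]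
    refine sum_congr rfl fun i _ => ?_
    rw [mul_sum, mul_sum, mul_sum, ← sum_add_distrib, ← sum_add_distrib]
    exact sum_congr rfl fun j _ => by ring
  rw [h]
  linear_combination 3*p*simplex_one c + q*simplex_i c + r*simplex_j c

lemma filter_sum (k u t : ℕ) (h : ∀ s, 2*u + 9*s ≤ 9*k ↔ t + s ≤ k) (g : ℕ → ℕ → ℤ) :
    (∑ i ∈ range (k+1), ∑ j ∈ range (k+1), (if 2*u + 9*i + 9*j ≤ 9*k then g i j else 0))
      = ∑ i ∈ range (k+1-t), ∑ j ∈ range (k+1-t-i), g i j := by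
  have hin : ∀ i, (∑ j ∈ range (k+1), (if 2*u + 9*i + 9*j ≤ 9*k then g i j else 0))
      = ∑ j ∈ range (k+1-t-i), g i j := by
    intro i
    rw [← sum_filter]
    apply sum_congr _ (fun _ _ => rfl)
    ext x
    simp only [mem_filter, mem_range]
    have := h (i + x)
    omega
  rw [sum_congr rfl fun i _ => hin i]
  refine (sum_subset ?_ ?_).symm
  · intro x hx; simp only [mem_range] at *; omega
  · intro x _ hnx
    have : k+1-t-x = 0 := by simp only [mem_range] at hnx; omega
    rw [this]; simp

def D (k : ℕ) : Finset (ℕ × ℕ × ℕ) :=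
  (range 9 ×ˢ range (k+1) ×ˢ range (k+1)).filter (fun z => 2*z.1 + 9*z.2.1 + 9*z.2.2 ≤ 9*k)

lemma Dsum_aux (k : ℕ) (g : ℕ → ℕ → ℕ → ℤ) :
    ∑ z ∈ D k, g z.1 z.2.1 z.2.2
      = ∑ u ∈ range 9, ∑ i ∈ range (k+1), ∑ j ∈ range (k+1),
          (if 2*u+9*i+9*j ≤ 9*k then g u i j else 0) := by
  rw [D, sum_filter, sum_product]
  exact sum_congr rfl fun u _ => by rw [sum_product]

lemma Dsum (k : ℕ) (hk : 1 ≤ k) (a p q r : ℤ) :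
    (∑ z ∈ D k, (a + p*z.1 + q*z.2.1 + r*z.2.2)) * 6
      = 3*a*((k:ℤ)+1)*(k+2) + (q+r)*k*(k+1)*(k+2)
        + (12*a+30*p)*k*(k+1) + 4*(q+r)*((k:ℤ)-1)*k*(k+1)
        + (12*a+78*p)*((k:ℤ)-1)*k + 4*(q+r)*((k:ℤ)-2)*((k:ℤ)-1)*k := by
  set C : ℕ → ℤ := fun u => if u = 0 then (k:ℤ)+1 else if u ≤ 4 then (k:ℤ) else (k:ℤ)-1 with hC
  rw [Dsum_aux k (fun u i j => a + p*u + q*i + r*j), sum_mul]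
  have step : ∀ u ∈ range 9,
      (∑ i ∈ range (k+1), ∑ j ∈ range (k+1),
        (if 2*u+9*i+9*j ≤ 9*k then (a + p*u + q*i + r*j) else 0)) * 6
      = 3*(a+p*u)*(C u)*(C u + 1) + (q+r)*((C u)-1)*(C u)*((C u)+1) := by
    intro u hu
    rw [filter_sum k u ((2*u+8)/9) (fun s => by omega)]
    have hc : ((k+1-(2*u+8)/9 : ℕ):ℤ) = C u := by
      simp only [mem_range] at hu
      simp only [hC]
      split_ifs <;> omega
    have hs := simplex_lin (k+1-(2*u+8)/9) (a + p*u) q r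
    rw [hc] at hs
    linarith
  rw [sum_congr rfl step]
  simp only [sum_range_succ, sum_range_zero, hC]
  norm_num
  ring

def phi (k : ℕ) : ℕ × ℕ × ℕ → ℝ × ℝ := fun z =>
  ((((z.1 : ℤ) + 4*z.2.1 + 5*z.2.2 - 3*k : ℤ) : ℝ),
   (((z.1 : ℤ) + 5*z.2.1 + 4*z.2.2 - 3*k : ℤ) : ℝ))

lemma phi_injOn (k : ℕ) : Set.InjOn (phi k) (D k) := by
  rintro ⟨u,i,j⟩ hz ⟨u',i',j'⟩ hw h
  simp only [D, coe_filter, Set.mem_setOf_eq, mem_product, mem_range] at hz hw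
  have e1 : ((u:ℤ) + 4*i + 5*j - 3*k) = ((u':ℤ) + 4*i' + 5*j' - 3*k) := by
    have h1 := congrArg Prod.fst h
    simp only [phi] at h1
    exact_mod_cast h1
  have e2 : ((u:ℤ) + 5*i + 4*j - 3*k) = ((u':ℤ) + 5*i' + 4*j' - 3*k) := by
    have h2 := congrArg Prod.snd h
    simp only [phi] at h2
    exact_mod_cast h2
  obtain ⟨hu9, _, _⟩ := hz.1
  obtain ⟨hu9', _, _⟩ := hw.1
  have : u = u' ∧ i = i' ∧ j = j' := by omega
  simp [Prod.ext_iff, this.1, this.2.1, this.2.2]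

noncomputable def F (k : ℕ) : Finset (ℝ × ℝ) := (D k).image (phi k)

lemma F_card (k : ℕ) (hk : 1 ≤ k) : ((F k).card : ℤ) * 2 = 9*(k:ℤ)^2 + 3*k + 2 := by
  have hc : (F k).card = (D k).card := Finset.card_image_of_injOn (phi_injOn k)
  have h1 : ((D k).card : ℤ) = ∑ z ∈ D k, (1 + 0*(z.1:ℤ) + 0*z.2.1 + 0*z.2.2) := by
    simp
  have := Dsum k hk 1 0 0 0
  rw [← h1] at this
  rw [hc]
  linarith

lemma F_sum (k : ℕ) (hk : 1 ≤ k) :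
    (∑ x ∈ F k, x) = ((-2*(k:ℝ), -2*(k:ℝ)) : ℝ × ℝ) := by
  rw [F, Finset.sum_image (fun x hx y hy h => phi_injOn k hx hy h)]
  have hm := Dsum k hk (-3*(k:ℤ)) 1 4 5
  have hn := Dsum k hk (-3*(k:ℤ)) 1 5 4
  have hm' : (∑ z ∈ D k, ((-3*(k:ℤ)) + 1*z.1 + 4*z.2.1 + 5*z.2.2)) = -2*(k:ℤ) := by linarith [hm]
  have hn' : (∑ z ∈ D k, ((-3*(k:ℤ)) + 1*z.1 + 5*z.2.1 + 4*z.2.2)) = -2*(k:ℤ) := by linarith [hn]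
  apply Prod.ext
  · rw [Prod.fst_sum]
    have : ∀ z ∈ D k, (phi k z).1 = (((-3*(k:ℤ)) + 1*z.1 + 4*z.2.1 + 5*z.2.2 : ℤ) : ℝ) := by
      intro z _; simp only [phi]; push_cast; ring
    rw [sum_congr rfl this, ← Int.cast_sum, hm']
    push_cast; ring
  · rw [Prod.snd_sum]
    have : ∀ z ∈ D k, (phi k z).2 = (((-3*(k:ℤ)) + 1*z.1 + 5*z.2.1 + 4*z.2.2 : ℤ) : ℝ) := by
      intro z _; simp only [phi]; push_cast; ring
    rw [sum_congr rfl this, ← Int.cast_sum, hn']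
    push_cast; ring

lemma kD_eq (k : ℕ) : (k:ℝ) • Δ₁
    = convexHull ℝ {((k:ℝ), 2*(k:ℝ)), (2*(k:ℝ), (k:ℝ)), (-3*(k:ℝ), -3*(k:ℝ))} := by
  rw [Δ₁, ← convexHull_smul]
  congr 1
  rw [Set.smul_set_insert, Set.smul_set_insert, Set.smul_set_singleton]
  simp only [Prod.smul_mk, smul_eq_mul]
  norm_num [mul_comm]

lemma lin1 : IsLinearMap ℝ (fun p : ℝ × ℝ => p.1 + p.2) :=
  ⟨fun x y => by simp [Prod.fst_add, Prod.snd_add]; ring,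
   fun c x => by simp [Prod.smul_fst, Prod.smul_snd, smul_eq_mul]; ring⟩

lemma lin2 : IsLinearMap ℝ (fun p : ℝ × ℝ => 4*p.1 - 5*p.2) :=
  ⟨fun x y => by simp [Prod.fst_add, Prod.snd_add]; ring,
   fun c x => by simp [Prod.smul_fst, Prod.smul_snd, smul_eq_mul]; ring⟩

lemma lin3 : IsLinearMap ℝ (fun p : ℝ × ℝ => 5*p.1 - 4*p.2) :=
  ⟨fun x y => by simp [Prod.fst_add, Prod.snd_add]; ring,
   fun c x => by simp [Prod.smul_fst, Prod.smul_snd, smul_eq_mul]; ring⟩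

lemma mem_tri (k : ℕ) (hk : 1 ≤ k) (p : ℝ × ℝ) :
    p ∈ (k:ℝ) • Δ₁ ↔ p.1 + p.2 ≤ 3*k ∧ 4*p.1 - 5*p.2 ≤ 3*k ∧ -(3*(k:ℝ)) ≤ 5*p.1 - 4*p.2 := by
  have hk0 : (1:ℝ) ≤ (k:ℝ) := by exact_mod_cast hk
  rw [kD_eq]
  constructor
  · intro h
    refine ⟨?_, ?_, ?_⟩
    · refine convexHull_min ?_ (convex_halfSpace_le lin1 (3*(k:ℝ))) h
      rintro x (rfl | rfl | rfl) <;> simp <;> linarith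
    · refine convexHull_min ?_ (convex_halfSpace_le lin2 (3*(k:ℝ))) h
      rintro x (rfl | rfl | rfl) <;> simp <;> linarith
    · refine convexHull_min ?_ (convex_halfSpace_ge lin3 (-(3*(k:ℝ)))) h
      rintro x (rfl | rfl | rfl) <;> simp <;> linarith
  · rintro ⟨h1, h2, h3⟩
    have hk9 : (0:ℝ) < 9*k := by linarith
    set A : ℝ × ℝ := ((k:ℝ), 2*(k:ℝ)) with hA
    set B : ℝ × ℝ := (2*(k:ℝ), (k:ℝ)) with hB
    set C : ℝ × ℝ := (-3*(k:ℝ), -3*(k:ℝ)) with hC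
    set α : ℝ := (3*(k:ℝ) - 4*p.1 + 5*p.2)/(9*k) with hα
    set β : ℝ := (5*p.1 - 4*p.2 + 3*(k:ℝ))/(9*k) with hβ
    set γ : ℝ := (3*(k:ℝ) - p.1 - p.2)/(9*k) with hγ
    have key : α • A + β • B + γ • C ∈
        convexHull ℝ ({A, B, C} : Set (ℝ × ℝ)) := by
      have h3' : ∑ i : Fin 3, (![α, β, γ] i) • (![A, B, C] i) ∈
          convexHull ℝ ({A, B, C} : Set (ℝ × ℝ)) := by
        apply Convex.sum_mem (convex_convexHull ℝ _)
        · intro i _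
          fin_cases i <;> simp only [Matrix.cons_val_zero, Matrix.cons_val_one,
            Matrix.head_cons, Matrix.cons_val_two, Matrix.tail_cons, hα, hβ, hγ] <;>
            (apply div_nonneg <;> linarith)
        · rw [Fin.sum_univ_three]
          simp only [Matrix.cons_val_zero, Matrix.cons_val_one, Matrix.head_cons,
            Matrix.cons_val_two, Matrix.tail_cons]
          rw [hα, hβ, hγ]; field_simp; ring
        · intro i _
          fin_cases i <;> exact subset_convexHull ℝ _ (by simp)
      rw [Fin.sum_univ_three] at h3'
      simpa using h3'
    have hp : α • A + β • B + γ • C = p := by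
      rw [hA, hB, hC]
      apply Prod.ext <;>
        simp only [Prod.smul_mk, Prod.fst_add, Prod.snd_add, smul_eq_mul] <;>
        · rw [hα, hβ, hγ]; field_simp; ring
    rwa [hp] at key

lemma inter_eq (k : ℕ) (hk : 1 ≤ k) : ((k:ℝ) • Δ₁) ∩ lat = ↑(F k) := by
  ext p
  constructor
  · rintro ⟨hp, m, n, rfl⟩
    rw [mem_tri k hk] at hp
    obtain ⟨h1, h2, h3⟩ := hp
    simp only [Prod.fst, Prod.snd] at h1 h2 h3
    have i1 : (m:ℤ) + n ≤ 3*k := by exact_mod_cast h1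
    have i2 : 4*(m:ℤ) - 5*n ≤ 3*k := by exact_mod_cast h2
    have i3 : -(3*(k:ℤ)) ≤ 5*m - 4*n := by exact_mod_cast h3
    set A : ℤ := 5*n - 4*m + 3*k with hA
    set B : ℤ := 5*m - 4*n + 3*k with hB
    have hA0 : 0 ≤ A := by omega
    have hB0 : 0 ≤ B := by omega
    have hmod : A % 9 = B % 9 := by omega
    have e1 : ((A % 9).toNat : ℤ) + 4*((A / 9).toNat : ℤ) + 5*((B / 9).toNat : ℤ) - 3*k = m := by
      omega
    have e2 : ((A % 9).toNat : ℤ) + 5*((A / 9).toNat : ℤ) + 4*((B / 9).toNat : ℤ) - 3*k = n := by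
      omega
    simp only [F, Finset.coe_image, Set.mem_image, Finset.mem_coe]
    refine ⟨((A % 9).toNat, (A / 9).toNat, (B / 9).toNat), ?_, ?_⟩
    · simp only [D, mem_filter, mem_product, mem_range]
      refine ⟨⟨?_, ?_, ?_⟩, ?_⟩ <;> omega
    · simp only [phi]
      rw [Prod.mk.injEq]
      exact ⟨congrArg (fun z : ℤ => (z : ℝ)) e1, congrArg (fun z : ℤ => (z : ℝ)) e2⟩
  · intro hp
    simp only [F, Finset.coe_image, Set.mem_image, Finset.mem_coe] at hp
    obtain ⟨z, hz, rfl⟩ := hp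
    simp only [D, mem_filter, mem_product, mem_range] at hz
    obtain ⟨⟨hu, hi, hj⟩, hcond⟩ := hz
    constructor
    · rw [mem_tri k hk]
      simp only [phi]
      have hc : ((2*z.1 + 9*z.2.1 + 9*z.2.2 : ℕ) : ℝ) ≤ ((9*k : ℕ) : ℝ) := by
        exact_mod_cast hcond
      push_cast
      push_cast at hc
      have n1 : (0:ℝ) ≤ (z.1 : ℝ) := by positivity
      have n2 : (0:ℝ) ≤ (z.2.1 : ℝ) := by positivity
      have n3 : (0:ℝ) ≤ (z.2.2 : ℝ) := by positivity
      refine ⟨by linarith, by linarith, by linarith⟩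
    · exact ⟨_, _, rfl⟩

lemma lhs_eval (k : ℕ) (hk : 1 ≤ k) :
    ((((k : ℝ) • Δ₁) ∩ lat).ncard : ℝ)⁻¹ • (∑ᶠ x ∈ ((k : ℝ) • Δ₁) ∩ lat, x)
      = (4 / (9 * (k : ℝ) ^ 2 + 3 * k + 2)) • ((-(k : ℝ), -(k : ℝ)) : ℝ × ℝ) := by
  rw [inter_eq k hk, finsum_mem_coe_finset, Set.ncard_coe_finset, F_sum k hk]
  have hcard : ((F k).card : ℝ) * 2 = 9*(k:ℝ)^2 + 3*k + 2 := by exact_mod_cast F_card k hk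
  have hk1 : (1:ℝ) ≤ (k:ℝ) := by exact_mod_cast hk
  have hpos : (0:ℝ) < 9*(k:ℝ)^2 + 3*k + 2 := by positivity
  have hc0 : ((F k).card : ℝ) ≠ 0 := by intro h; rw [h] at hcard; linarith
  apply Prod.ext <;>
    simp only [Prod.smul_mk, smul_eq_mul, Prod.fst, Prod.snd] <;>
    · field_simp
      ring_nf
      nlinarith [hcard]

noncomputable def Mx : Matrix (Fin 2) (Fin 2) ℝ := !![-8/3, 7/3; -7/3, 5/3]

noncomputable def Lmap : (ℝ × ℝ) →ₗ[ℝ] (ℝ × ℝ) :=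
  Matrix.toLin (Module.Basis.finTwoProd ℝ) (Module.Basis.finTwoProd ℝ) Mx

lemma Lmap_apply (p : ℝ × ℝ) :
    Lmap p = ((-8/3)*p.1 + (7/3)*p.2, (-7/3)*p.1 + (5/3)*p.2) :=
  Matrix.toLin_finTwoProd_apply _ _ _ _ p

lemma Lmap_det : LinearMap.det Lmap = 1 := by
  rw [Lmap, LinearMap.det_toLin, Mx, Matrix.det_fin_two_of]
  norm_num

lemma Lmap_mp : MeasurePreserving Lmap (volume : Measure (ℝ × ℝ)) volume := by
  refine ⟨Lmap.continuous_of_finiteDimensional.measurable, ?_⟩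
  have h := Measure.map_linearMap_addHaar_eq_smul_addHaar (volume : Measure (ℝ × ℝ))
    (f := Lmap) (by rw [Lmap_det]; norm_num)
  rw [Lmap_det] at h
  simpa using h

noncomputable def Leq : (ℝ × ℝ) ≃ₗ[ℝ] (ℝ × ℝ) :=
  LinearMap.equivOfDetNeZero Lmap (by rw [Lmap_det]; norm_num)

lemma Lemb : MeasurableEmbedding (⇑Lmap) := by
  have h := Leq.toContinuousLinearEquiv.toHomeomorph.measurableEmbedding
  have hcoe : ⇑Leq.toContinuousLinearEquiv.toHomeomorph = ⇑Lmap := by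
    ext x : 1
    simp [Leq, LinearMap.equivOfDetNeZero]
  rwa [hcoe] at h

lemma Limg (k : ℕ) : Lmap '' ((k:ℝ) • Δ₁) = (k:ℝ) • Δ₁ := by
  rw [kD_eq, LinearMap.image_convexHull]
  congr 1
  rw [Set.image_insert_eq, Set.image_insert_eq, Set.image_singleton]
  rw [show Lmap ((k:ℝ), 2*(k:ℝ)) = (2*(k:ℝ), (k:ℝ)) by rw [Lmap_apply]; norm_num; constructor <;> ring,
      show Lmap (2*(k:ℝ), (k:ℝ)) = (-3*(k:ℝ), -3*(k:ℝ)) by rw [Lmap_apply]; norm_num; constructor <;> ring,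
      show Lmap (-3*(k:ℝ), -3*(k:ℝ)) = ((k:ℝ), 2*(k:ℝ)) by rw [Lmap_apply]; norm_num; constructor <;> ring]
  ext x
  simp only [Set.mem_insert_iff, Set.mem_singleton_iff]
  tauto

lemma int_zero (k : ℕ) : (∫ x in (k : ℝ) • Δ₁, x) = (0 : ℝ × ℝ) := by
  have hcomp : IsCompact ((k:ℝ) • Δ₁) := by
    rw [kD_eq]
    exact Set.Finite.isCompact_convexHull ℝ (by simp)
  have hint : IntegrableOn (fun x : ℝ × ℝ => x) ((k:ℝ) • Δ₁) volume :=
    ContinuousOn.integrableOn_compact hcomp continuousOn_id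
  have key : (∫ x in (k:ℝ) • Δ₁, x) = Lmap (∫ x in (k:ℝ) • Δ₁, x) := by
    conv_lhs => rw [← Limg k]
    rw [Lmap_mp.setIntegral_image_emb Lemb]
    have h2 : ∫ x in (k:ℝ) • Δ₁, Lmap x
        = Lmap.toContinuousLinearMap (∫ x in (k:ℝ) • Δ₁, x) := by
      have := (LinearMap.toContinuousLinearMap Lmap).integral_comp_comm hint
      simpa using this
    simpa using h2
  have h1 := congrArg Prod.fst key
  have h2 := congrArg Prod.snd key
  rw [Lmap_apply] at h1 h2
  simp only [Prod.fst, Prod.snd] at h1 h2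
  apply Prod.ext
  · show (∫ x in (k:ℝ) • Δ₁, x).1 = 0
    linarith [h1, h2]
  · show (∫ x in (k:ℝ) • Δ₁, x).2 = 0
    linarith [h1, h2]


/-- For every `k ≥ 1`, the average of the lattice points of `kΔ₁` differs from the
barycenter of `kΔ₁`: the former equals `(4/(9k²+3k+2))·(-k,-k)` while the latter is `(0,0)`. -/
theorem X1_barycenter_obstruction (k : ℕ) (hk : 1 ≤ k) :
    ((((k : ℝ) • Δ₁) ∩ lat).ncard : ℝ)⁻¹ • (∑ᶠ x ∈ ((k : ℝ) • Δ₁) ∩ lat, x) ≠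
        (volume ((k : ℝ) • Δ₁)).toReal⁻¹ • (∫ x in (k : ℝ) • Δ₁, x) ∧
      ((((k : ℝ) • Δ₁) ∩ lat).ncard : ℝ)⁻¹ • (∑ᶠ x ∈ ((k : ℝ) • Δ₁) ∩ lat, x) =
        (4 / (9 * (k : ℝ) ^ 2 + 3 * k + 2)) • ((-(k : ℝ), -(k : ℝ)) : ℝ × ℝ) ∧
      (volume ((k : ℝ) • Δ₁)).toReal⁻¹ • (∫ x in (k : ℝ) • Δ₁, x) = (0 : ℝ × ℝ) := by
  have hk1 : (1:ℝ) ≤ (k:ℝ) := by exact_mod_cast hk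
  refine ⟨?_, lhs_eval k hk, by rw [int_zero k, smul_zero]⟩
  rw [lhs_eval k hk, int_zero k, smul_zero]
  intro h
  have h1 := congrArg Prod.fst h
  simp only [Prod.smul_mk, smul_eq_mul, Prod.fst] at h1
  have hneg : 4 / (9*(k:ℝ)^2 + 3*k + 2) * (-(k:ℝ)) < 0 :=
    mul_neg_of_pos_of_neg (by positivity) (by linarith)
  have h0 : (0 : ℝ × ℝ).1 = 0 := rfl
  rw [h0] at h1
  linarith
end
end

section
/- Let Δ₁ be the convex hull of {(1,2),(2,1),(−3,−3)} in ℝ². For every integer k ≥ 1 the number of lattice points of kΔ₁ is |kΔ₁ ∩ ℤ²| = (9k² + 3k + 2)/2, and the sum of the lattice points is Σ_{x ∈ kΔ₁ ∩ ℤ²} x = (−2k, −2k); equivalently, (1/|kΔ₁ ∩ ℤ²|)·Σ_{x ∈ kΔ₁ ∩ ℤ²} x = (4/(9k²+3k+2))·(−k,−k) ≠ (0,0). -/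
open MeasureTheory Pointwise

noncomputable section

namespace X1aux
open Finset


def F1 (x : ℤ) : ℤ := (x/2) * ((x-1)/2)
def F2 (x : ℤ) : ℤ := (x/2) * ((x/2) - 1) * (2*(x/2) - 1) + 3 * (x%2) * (x/2)^2

lemma F1_succ (x : ℤ) : F1 (x+1) = F1 x + x/2 := by
  unfold F1
  have h1 : (x+1)/2 = (x-1)/2 + 1 := by omega
  have h2 : (x+1-1)/2 = x/2 := by omega
  rw [h1, h2]; ring

lemma F2_succ (x : ℤ) : F2 (x+1) = F2 x + 3*(x/2)^2 := by
  unfold F2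
  obtain h | h : x % 2 = 0 ∨ x % 2 = 1 := by omega
  · have h1 : (x+1)/2 = x/2 := by omega
    have h2 : (x+1)%2 = 1 := by omega
    rw [h1, h2, h]; ring
  · have h1 : (x+1)/2 = x/2 + 1 := by omega
    have h2 : (x+1)%2 = 0 := by omega
    rw [h1, h2, h]; ring

lemma sum_floor_sub (c : ℤ) : ∀ n : ℕ, ∑ j ∈ range n, ((c - j)/2) = F1 (c+1) - F1 (c+1-n)
  | 0 => by simp
  | (n+1) => by
    rw [sum_range_succ, sum_floor_sub c n]
    rw [show (c + 1 - (n:ℤ)) = (c - n) + 1 by ring, F1_succ (c - n)]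
    rw [show ((n+1:ℕ):ℤ) = (n:ℤ)+1 by push_cast; ring]
    rw [show (c + 1 - ((n:ℤ)+1)) = c - n by ring]
    ring

lemma sum_floor_sub_sq (c : ℤ) : ∀ n : ℕ,
    3 * ∑ j ∈ range n, ((c - j)/2)^2 = F2 (c+1) - F2 (c+1-n)
  | 0 => by simp
  | (n+1) => by
    rw [sum_range_succ, mul_add, sum_floor_sub_sq c n]
    rw [show (c + 1 - (n:ℤ)) = (c - n) + 1 by ring, F2_succ (c - n)]
    rw [show ((n+1:ℕ):ℤ) = (n:ℤ)+1 by push_cast; ring]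
    rw [show (c + 1 - ((n:ℤ)+1)) = c - n by ring]
    ring

lemma sum_lin (a b : ℤ) : ∀ n : ℕ, 2 * ∑ j ∈ range n, (a * j + b) = a * n * (n-1) + 2 * n * b
  | 0 => by simp
  | (n+1) => by
    rw [sum_range_succ, mul_add, sum_lin a b n]
    push_cast; ring

lemma sum_lin_sq (a b : ℤ) : ∀ n : ℕ,
    6 * ∑ j ∈ range n, (a * j + b)^2 =
      a^2 * n * (n-1) * (2*n-1) + 6 * a * b * n * (n-1) + 6 * n * b^2
  | 0 => by simp
  | (n+1) => by
    rw [sum_range_succ, mul_add, sum_lin_sq a b n]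
    push_cast; ring



/-- lower endpoint of the row at height `d` -/
def L (k : ℕ) (d : ℤ) : ℤ := max (4*d - 3*k) (-5*d - 3*k)
/-- upper endpoint -/
def U (k : ℕ) (d : ℤ) : ℤ := (3*k - d)/2

def row (k : ℕ) (d : ℤ) : Finset (ℤ × ℤ) :=
  (Finset.Icc (L k d) (U k d)).image (fun n => (n + d, n))

def S (k : ℕ) : Finset (ℤ × ℤ) := (Finset.Icc (-(k:ℤ)) k).biUnion (row k)

lemma mem_S {k : ℕ} {p : ℤ × ℤ} :
    p ∈ S k ↔ p.1 + p.2 ≤ 3*k ∧ 4*p.1 - 5*p.2 ≤ 3*k ∧ 4*p.2 - 5*p.1 ≤ 3*k := by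
  obtain ⟨m, n⟩ := p
  simp only [S, row, L, U, Finset.mem_biUnion, Finset.mem_Icc, Finset.mem_image,
    Prod.mk.injEq]
  constructor
  · rintro ⟨d, ⟨hd1, hd2⟩, x, ⟨hx1, hx2⟩, rfl, rfl⟩
    omega
  · rintro ⟨h1, h2, h3⟩
    exact ⟨m - n, by omega, n, by omega, by ring, rfl⟩

lemma row_disjoint (k : ℕ) : ∀ d ∈ Finset.Icc (-(k:ℤ)) k, ∀ d' ∈ Finset.Icc (-(k:ℤ)) k,
    d ≠ d' → Disjoint (row k d) (row k d') := by
  intro d _ d' _ hne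
  simp only [Finset.disjoint_left, row, Finset.mem_image]
  rintro p ⟨x, _, rfl⟩ ⟨y, _, h⟩
  simp only [Prod.mk.injEq] at h
  omega

lemma row_inj (k : ℕ) (d : ℤ) : Function.Injective (fun n : ℤ => (n + d, n)) := by
  intro a b h; simpa using congrArg Prod.snd h

lemma L_le_U {k : ℕ} {d : ℤ} (hd : d ∈ Finset.Icc (-(k:ℤ)) k) : L k d ≤ U k d := by
  simp only [Finset.mem_Icc] at hd
  simp only [L, U]
  omega

lemma card_S (k : ℕ) : ((S k).card : ℤ) = ∑ d ∈ Finset.Icc (-(k:ℤ)) k, (U k d - L k d + 1) := by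
  rw [S, Finset.card_biUnion (row_disjoint k)]
  push_cast
  refine Finset.sum_congr rfl fun d hd => ?_
  rw [row, Finset.card_image_of_injective _ (row_inj k d), Int.card_Icc]
  have := L_le_U hd
  omega

lemma snd_sum_S (k : ℕ) :
    ∑ p ∈ S k, p.2 = ∑ d ∈ Finset.Icc (-(k:ℤ)) k, ∑ n ∈ Finset.Icc (L k d) (U k d), n := by
  rw [S, Finset.sum_biUnion (row_disjoint k)]
  refine Finset.sum_congr rfl fun d hd => ?_
  rw [row, Finset.sum_image (fun a _ b _ h => row_inj k d h)]

lemma swap_S (k : ℕ) : (S k).image Prod.swap = S k := by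
  ext p
  rw [Finset.mem_image]
  constructor
  · rintro ⟨q, hq, rfl⟩
    rw [mem_S] at hq ⊢
    simp only [Prod.fst_swap, Prod.snd_swap]
    omega
  · intro hp
    refine ⟨p.swap, ?_, Prod.swap_swap p⟩
    rw [mem_S] at hp ⊢
    simp only [Prod.fst_swap, Prod.snd_swap]
    omega

lemma fst_sum_S (k : ℕ) : ∑ p ∈ S k, p.1 = ∑ p ∈ S k, p.2 := by
  conv_lhs => rw [← swap_S k]
  rw [Finset.sum_image (by intro a _ b _ h; exact Prod.swap_injective h)]
  simp



lemma Icc_img (a b : ℤ) :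
    Finset.Icc a b = (Finset.range (b+1-a).toNat).image (fun (j:ℕ) => a + (j:ℤ)) := by
  ext x
  simp only [Finset.mem_Icc, Finset.mem_image, Finset.mem_range]
  constructor
  · rintro ⟨h1, h2⟩
    exact ⟨(x - a).toNat, by omega, by omega⟩
  · rintro ⟨j, hj, rfl⟩
    omega

lemma add_inj (a : ℤ) : ∀ x ∈ (Finset.range n), ∀ y ∈ (Finset.range n),
    a + (x:ℤ) = a + (y:ℤ) → x = y := by
  intro x _ y _ h; omega

lemma sum_Icc_id (a b : ℤ) (h : a ≤ b + 1) :
    2 * ∑ n ∈ Finset.Icc a b, n = (a + b) * (b - a + 1) := by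
  rw [Icc_img, Finset.sum_image (add_inj a)]
  have hN : ((b+1-a).toNat : ℤ) = b + 1 - a := by omega
  have h2 : ∀ j ∈ Finset.range (b+1-a).toNat, a + (j:ℤ) = 1 * (j:ℤ) + a := by
    intro j _; ring
  rw [Finset.sum_congr rfl h2, sum_lin, hN]
  ring

lemma hsplit (k : ℕ) : Finset.Icc (-(k:ℤ)) k = Finset.Icc (-(k:ℤ)) (-1) ∪ Finset.Icc 0 k := by
  ext x
  simp only [Finset.mem_Icc, Finset.mem_union]
  omega

lemma hdisj (k : ℕ) : Disjoint (Finset.Icc (-(k:ℤ)) (-1)) (Finset.Icc 0 (k:ℤ)) := by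
  rw [Finset.disjoint_left]
  intro x hx hx'
  simp only [Finset.mem_Icc] at hx hx'
  omega

lemma himg1 (k : ℕ) :
    Finset.Icc (-(k:ℤ)) (-1) = (Finset.range k).image (fun (j:ℕ) => -(k:ℤ) + (j:ℤ)) := by
  have h : ((-1:ℤ)+1 - (-(k:ℤ))).toNat = k := by omega
  rw [Icc_img, h]

lemma himg2 (k : ℕ) :
    Finset.Icc (0:ℤ) (k:ℤ) = (Finset.range (k+1)).image (fun (j:ℕ) => (0:ℤ) + (j:ℤ)) := by
  have h : ((k:ℤ)+1 - 0).toNat = k+1 := by omega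
  rw [Icc_img, h]

lemma hLneg (k : ℕ) (j : ℕ) (hj : j ∈ Finset.range k) :
    L k (-(k:ℤ) + (j:ℤ)) = (-5)*(j:ℤ) + 2*(k:ℤ) := by
  simp only [Finset.mem_range] at hj
  simp only [L]
  omega

lemma hUneg (k : ℕ) (j : ℕ) :
    U k (-(k:ℤ) + (j:ℤ)) = (4*(k:ℤ) - (j:ℤ))/2 := by
  simp only [U]
  congr 1
  ring

lemma hLpos (k : ℕ) (j : ℕ) :
    L k ((0:ℤ) + (j:ℤ)) = 4*(j:ℤ) + (-3)*(k:ℤ) := by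
  simp only [L]
  omega

lemma hUpos (k : ℕ) (j : ℕ) :
    U k ((0:ℤ) + (j:ℤ)) = (3*(k:ℤ) - (j:ℤ))/2 := by
  simp only [U]
  congr 1
  ring

lemma hF1a (k : ℕ) : F1 (2*(k:ℤ)) = (k:ℤ)*((k:ℤ)-1) := by
  have h1 : (2*(k:ℤ))/2 = (k:ℤ) := by omega
  have h2 : (2*(k:ℤ)-1)/2 = (k:ℤ)-1 := by omega
  rw [F1, h1, h2]

lemma hF1c (k : ℕ) : F1 (4*(k:ℤ)+1) = 4*(k:ℤ)^2 := by
  have h1 : (4*(k:ℤ)+1)/2 = 2*(k:ℤ) := by omega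
  have h2 : (4*(k:ℤ)+1-1)/2 = 2*(k:ℤ) := by omega
  rw [F1, h1, h2]; ring

lemma hF2a (k : ℕ) : F2 (2*(k:ℤ)) = (k:ℤ)*((k:ℤ)-1)*(2*(k:ℤ)-1) := by
  have h1 : (2*(k:ℤ))/2 = (k:ℤ) := by omega
  have h2 : (2*(k:ℤ))%2 = 0 := by omega
  rw [F2, h1, h2]; ring

lemma hF2c (k : ℕ) : F2 (4*(k:ℤ)+1) = 2*(k:ℤ)*(2*(k:ℤ)-1)*(4*(k:ℤ)-1) + 12*(k:ℤ)^2 := by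
  have h1 : (4*(k:ℤ)+1)/2 = 2*(k:ℤ) := by omega
  have h2 : (4*(k:ℤ)+1)%2 = 1 := by omega
  rw [F2, h1, h2]; ring



lemma two_card (k : ℕ) : 2 * ((S k).card : ℤ) = 9*(k:ℤ)^2 + 3*(k:ℤ) + 2 := by
  rw [card_S, hsplit, Finset.sum_union (hdisj k), himg1, himg2,
    Finset.sum_image (add_inj _), Finset.sum_image (add_inj _)]
  have c1 : ∀ j ∈ Finset.range k, U k (-(k:ℤ)+(j:ℤ)) - L k (-(k:ℤ)+(j:ℤ)) + 1 =
      (4*(k:ℤ) - (j:ℤ))/2 - ((-5)*(j:ℤ) + (2*(k:ℤ) - 1)) := by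
    intro j hj; rw [hUneg, hLneg k j hj]; ring
  have c2 : ∀ j ∈ Finset.range (k+1), U k ((0:ℤ)+(j:ℤ)) - L k ((0:ℤ)+(j:ℤ)) + 1 =
      (3*(k:ℤ) - (j:ℤ))/2 - (4*(j:ℤ) + ((-3)*(k:ℤ) - 1)) := by
    intro j _; rw [hUpos, hLpos]; ring
  rw [Finset.sum_congr rfl c1, Finset.sum_congr rfl c2,
    Finset.sum_sub_distrib, Finset.sum_sub_distrib]
  have nA := sum_floor_sub (4*(k:ℤ)) k
  rw [show (4*(k:ℤ)+1-(k:ℕ) : ℤ) = 3*(k:ℤ)+1 by push_cast; ring] at nA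
  have nB := sum_lin (-5) (2*(k:ℤ) - 1) k
  have nC := sum_floor_sub (3*(k:ℤ)) (k+1)
  rw [show (3*(k:ℤ)+1-((k+1:ℕ)) : ℤ) = 2*(k:ℤ) by push_cast; ring] at nC
  have nD := sum_lin 4 ((-3)*(k:ℤ) - 1) (k+1)
  push_cast at nB nD
  linear_combination (2:ℤ)*nA - nB + 2*nC - nD + 2*(hF1c k) - 2*(hF1a k)



lemma snd_val (k : ℕ) : ∑ p ∈ S k, p.2 = -2*(k:ℤ) := by
  have h0 := snd_sum_S k
  rw [hsplit, Finset.sum_union (hdisj k), himg1, himg2,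
    Finset.sum_image (add_inj _), Finset.sum_image (add_inj _)] at h0
  have e1 : 2 * ∑ j ∈ Finset.range k,
        (∑ n ∈ Finset.Icc (L k (-(k:ℤ)+(j:ℤ))) (U k (-(k:ℤ)+(j:ℤ))), n)
      = ∑ j ∈ Finset.range k, (((4*(k:ℤ)-(j:ℤ))/2)^2 + ((4*(k:ℤ)-(j:ℤ))/2)
          - ((-5)*(j:ℤ)+2*(k:ℤ))^2 + ((-5)*(j:ℤ)+2*(k:ℤ))) := by
    rw [Finset.mul_sum]
    refine Finset.sum_congr rfl fun j hj => ?_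
    simp only [Finset.mem_range] at hj
    have hLU : L k (-(k:ℤ)+(j:ℤ)) ≤ U k (-(k:ℤ)+(j:ℤ)) + 1 := by
      have := L_le_U (k:=k) (d:=-(k:ℤ)+(j:ℤ)) (by simp only [Finset.mem_Icc]; omega)
      omega
    rw [sum_Icc_id _ _ hLU, hUneg, hLneg k j (by simpa using hj)]
    ring
  have e2 : 2 * ∑ j ∈ Finset.range (k+1),
        (∑ n ∈ Finset.Icc (L k ((0:ℤ)+(j:ℤ))) (U k ((0:ℤ)+(j:ℤ))), n)
      = ∑ j ∈ Finset.range (k+1), (((3*(k:ℤ)-(j:ℤ))/2)^2 + ((3*(k:ℤ)-(j:ℤ))/2)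
          - (4*(j:ℤ)+(-3)*(k:ℤ))^2 + (4*(j:ℤ)+(-3)*(k:ℤ))) := by
    rw [Finset.mul_sum]
    refine Finset.sum_congr rfl fun j hj => ?_
    simp only [Finset.mem_range] at hj
    have hLU : L k ((0:ℤ)+(j:ℤ)) ≤ U k ((0:ℤ)+(j:ℤ)) + 1 := by
      have := L_le_U (k:=k) (d:=(0:ℤ)+(j:ℤ)) (by simp only [Finset.mem_Icc]; omega)
      omega
    rw [sum_Icc_id _ _ hLU, hUpos, hLpos]
    ring
  rw [Finset.sum_add_distrib, Finset.sum_sub_distrib, Finset.sum_add_distrib] at e1 e2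
  have m1 := sum_floor_sub_sq (4*(k:ℤ)) k
  rw [show (4*(k:ℤ)+1-(k:ℕ) : ℤ) = 3*(k:ℤ)+1 by push_cast; ring] at m1
  have m2 := sum_floor_sub (4*(k:ℤ)) k
  rw [show (4*(k:ℤ)+1-(k:ℕ) : ℤ) = 3*(k:ℤ)+1 by push_cast; ring] at m2
  have m3 := sum_lin_sq (-5) (2*(k:ℤ)) k
  have m4 := sum_lin (-5) (2*(k:ℤ)) k
  have m5 := sum_floor_sub_sq (3*(k:ℤ)) (k+1)
  rw [show (3*(k:ℤ)+1-((k+1:ℕ)) : ℤ) = 2*(k:ℤ) by push_cast; ring] at m5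
  have m6 := sum_floor_sub (3*(k:ℤ)) (k+1)
  rw [show (3*(k:ℤ)+1-((k+1:ℕ)) : ℤ) = 2*(k:ℤ) by push_cast; ring] at m6
  have m7 := sum_lin_sq 4 ((-3)*(k:ℤ)) (k+1)
  have m8 := sum_lin 4 ((-3)*(k:ℤ)) (k+1)
  push_cast at m3 m4 m7 m8
  have key : 12 * ∑ p ∈ S k, p.2 = -24*(k:ℤ) := by
    linear_combination (12:ℤ)*h0 + 6*e1 + 6*e2 + 2*m1 + 6*m2 - m3 + 3*m4
      + 2*m5 + 6*m6 - m7 + 3*m8 + 2*(hF2c k) - 2*(hF2a k) + 6*(hF1c k) - 6*(hF1a k)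
  omega




lemma smul_Δ₁ (k : ℕ) : (k:ℝ) • Δ₁ =
    convexHull ℝ {((k:ℝ), 2*(k:ℝ)), (2*(k:ℝ), (k:ℝ)), (-3*(k:ℝ), -3*(k:ℝ))} := by
  rw [Δ₁, ← convexHull_smul]
  congr 1
  simp only [Set.smul_set_insert, Set.smul_set_singleton, Prod.smul_mk, smul_eq_mul]
  norm_num [mul_comm]

lemma lin1 : IsLinearMap ℝ (fun x : ℝ×ℝ => x.1 + x.2) :=
  ⟨fun x y => by simp [Prod.fst_add, Prod.snd_add]; ring,
   fun c x => by simp [smul_eq_mul]; ring⟩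

lemma lin2 : IsLinearMap ℝ (fun x : ℝ×ℝ => 4*x.1 - 5*x.2) :=
  ⟨fun x y => by simp [Prod.fst_add, Prod.snd_add]; ring,
   fun c x => by simp [smul_eq_mul]; ring⟩

lemma lin3 : IsLinearMap ℝ (fun x : ℝ×ℝ => 4*x.2 - 5*x.1) :=
  ⟨fun x y => by simp [Prod.fst_add, Prod.snd_add]; ring,
   fun c x => by simp [smul_eq_mul]; ring⟩

lemma hull_char (k : ℕ) (hk : 1 ≤ k) :
    convexHull ℝ {((k:ℝ), 2*(k:ℝ)), (2*(k:ℝ), (k:ℝ)), (-3*(k:ℝ), -3*(k:ℝ))} =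
    {x : ℝ×ℝ | x.1 + x.2 ≤ 3*(k:ℝ) ∧ 4*x.1 - 5*x.2 ≤ 3*(k:ℝ) ∧ 4*x.2 - 5*x.1 ≤ 3*(k:ℝ)} := by
  have hK : (1:ℝ) ≤ (k:ℝ) := by exact_mod_cast hk
  apply Set.Subset.antisymm
  · apply convexHull_min
    · rintro x hx
      simp only [Set.mem_insert_iff, Set.mem_singleton_iff] at hx
      rcases hx with rfl | rfl | rfl <;>
        refine ⟨by norm_num; nlinarith, by norm_num; nlinarith, by norm_num; nlinarith⟩
    · simp only [Set.setOf_and]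
      exact (convex_halfSpace_le lin1 _).inter
        ((convex_halfSpace_le lin2 _).inter (convex_halfSpace_le lin3 _))
  · rintro ⟨x₁, x₂⟩ ⟨h1, h2, h3⟩
    simp only [Set.mem_setOf_eq] at h1 h2 h3
    set K : ℝ := (k:ℝ) with hKdef
    have h9 : (0:ℝ) < 9*K := by linarith
    set w : Fin 3 → ℝ := ![(3*K - 4*x₁ + 5*x₂)/(9*K), (3*K + 5*x₁ - 4*x₂)/(9*K),
      (3*K - x₁ - x₂)/(9*K)] with hw
    set z : Fin 3 → ℝ×ℝ := ![(K, 2*K), (2*K, K), (-3*K, -3*K)] with hz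
    have hwnn : ∀ i ∈ Finset.univ, 0 ≤ w i := by
      intro i _
      fin_cases i <;> simp only [hw, Matrix.cons_val_zero, Matrix.cons_val_one,
        Matrix.head_cons, Matrix.cons_val_two, Matrix.tail_cons] <;>
        exact div_nonneg (by linarith) (by linarith)
    have hsum : ∑ i : Fin 3, w i = 1 := by
      rw [Fin.sum_univ_three]
      simp only [hw, Matrix.cons_val_zero, Matrix.cons_val_one, Matrix.head_cons,
        Matrix.cons_val_two, Matrix.tail_cons]
      field_simp
      ring
    have hzmem : ∀ i ∈ Finset.univ, z i ∈
        ({((k:ℝ), 2*(k:ℝ)), (2*(k:ℝ), (k:ℝ)), (-3*(k:ℝ), -3*(k:ℝ))} : Set (ℝ×ℝ)) := by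
      intro i _
      fin_cases i <;> simp [hz, hKdef]
    have hmem := Finset.centerMass_mem_convexHull Finset.univ hwnn
      (by rw [hsum]; norm_num) hzmem
    rw [Finset.centerMass_eq_of_sum_1 _ _ hsum, Fin.sum_univ_three] at hmem
    have hKne : K ≠ 0 := by linarith
    have heq : w 0 • z 0 + w 1 • z 1 + w 2 • z 2 = (x₁, x₂) := by
      simp only [hw, hz, Matrix.cons_val_zero, Matrix.cons_val_one, Matrix.head_cons,
        Matrix.cons_val_two, Matrix.tail_cons, Prod.smul_mk, smul_eq_mul]
      rw [Prod.mk_add_mk, Prod.mk_add_mk, Prod.mk.injEq]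
      constructor <;> (field_simp; ring)
    rwa [heq] at hmem


end X1aux

/-- For every `k ≥ 1`: the number of lattice points of `kΔ₁` is `(9k²+3k+2)/2`, their sum is
`(-2k,-2k)`, and hence their average is `(4/(9k²+3k+2))·(-k,-k) ≠ (0,0)`. -/
theorem X1_lattice_point_count_and_sum (k : ℕ) (hk : 1 ≤ k) :
    2 * (((k : ℝ) • Δ₁) ∩ lat).ncard = 9 * k ^ 2 + 3 * k + 2 ∧
      (∑ᶠ x ∈ ((k : ℝ) • Δ₁) ∩ lat, x) = ((-(2 * (k : ℝ)), -(2 * (k : ℝ))) : ℝ × ℝ) ∧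
      ((((k : ℝ) • Δ₁) ∩ lat).ncard : ℝ)⁻¹ • (∑ᶠ x ∈ ((k : ℝ) • Δ₁) ∩ lat, x) =
        (4 / (9 * (k : ℝ) ^ 2 + 3 * k + 2)) • ((-(k : ℝ), -(k : ℝ)) : ℝ × ℝ) ∧
      ((((k : ℝ) • Δ₁) ∩ lat).ncard : ℝ)⁻¹ • (∑ᶠ x ∈ ((k : ℝ) • Δ₁) ∩ lat, x) ≠
        (0 : ℝ × ℝ) := by
  have hinj : Function.Injective (fun p : ℤ × ℤ => (((p.1:ℝ), (p.2:ℝ)) : ℝ × ℝ)) := by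
    intro a b h
    simp only [Prod.mk.injEq] at h
    rw [Prod.ext_iff]
    exact ⟨by exact_mod_cast h.1, by exact_mod_cast h.2⟩
  have hset : ((k : ℝ) • Δ₁) ∩ lat =
      ↑((X1aux.S k).image (fun p : ℤ × ℤ => (((p.1:ℝ), (p.2:ℝ)) : ℝ × ℝ))) := by
    rw [X1aux.smul_Δ₁, X1aux.hull_char k hk]
    ext x
    simp only [Set.mem_inter_iff, Set.mem_setOf_eq, lat, Finset.coe_image, Set.mem_image,
      Finset.mem_coe]
    constructor
    · rintro ⟨⟨h1, h2, h3⟩, m, n, rfl⟩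
      refine ⟨(m, n), ?_, rfl⟩
      rw [X1aux.mem_S]
      dsimp only at h1 h2 h3 ⊢
      exact ⟨by exact_mod_cast h1, by exact_mod_cast h2, by exact_mod_cast h3⟩
    · rintro ⟨p, hp, rfl⟩
      rw [X1aux.mem_S] at hp
      obtain ⟨h1, h2, h3⟩ := hp
      refine ⟨⟨?_, ?_, ?_⟩, p.1, p.2, rfl⟩ <;> dsimp only
      · exact_mod_cast h1
      · exact_mod_cast h2
      · exact_mod_cast h3
  have hc : (((k : ℝ) • Δ₁) ∩ lat).ncard = (X1aux.S k).card := by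
    rw [hset, Set.ncard_coe_finset, Finset.card_image_of_injective _ hinj]
  have hz1 : ∑ p ∈ X1aux.S k, p.1 = -2*(k:ℤ) := by
    rw [X1aux.fst_sum_S]; exact X1aux.snd_val k
  have hs : (∑ᶠ x ∈ ((k : ℝ) • Δ₁) ∩ lat, x) = ((-(2 * (k : ℝ)), -(2 * (k : ℝ))) : ℝ × ℝ) := by
    rw [hset, finsum_mem_coe_finset, Finset.sum_image (fun a _ b _ h => hinj h)]
    rw [Prod.ext_iff]
    constructor
    · rw [Prod.fst_sum]
      simp only
      rw [← Int.cast_sum, hz1]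
      push_cast; ring
    · rw [Prod.snd_sum]
      simp only
      rw [← Int.cast_sum, X1aux.snd_val k]
      push_cast; ring
  have hcard : 2 * (X1aux.S k).card = 9 * k ^ 2 + 3 * k + 2 := by
    exact_mod_cast X1aux.two_card k
  have hkR : (1:ℝ) ≤ (k:ℝ) := by exact_mod_cast hk
  have hD : (0:ℝ) < 9 * (k:ℝ) ^ 2 + 3 * k + 2 := by positivity
  have hcr : ((X1aux.S k).card : ℝ) = (9 * (k:ℝ) ^ 2 + 3 * k + 2) / 2 := by
    have : (2:ℝ) * ((X1aux.S k).card : ℝ) = 9 * (k:ℝ) ^ 2 + 3 * k + 2 := by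
      exact_mod_cast X1aux.two_card k
    linarith
  refine ⟨by rw [hc]; exact hcard, hs, ?_, ?_⟩
  · rw [hc, hs, hcr, Prod.smul_def, Prod.smul_def]
    simp only [smul_eq_mul]
    rw [Prod.mk.injEq]
    constructor <;> (rw [inv_div]; ring)
  · rw [hc, hs, hcr, Prod.smul_def]
    simp only [smul_eq_mul]
    intro h
    have h1 := congrArg Prod.fst h
    simp only [Prod.fst_zero] at h1
    have hne : ((9 * (k:ℝ) ^ 2 + 3 * k + 2) / 2)⁻¹ > 0 := by positivity
    nlinarith
end
end

section
/- Let p₀, p₁, p₂ ∈ ℝ² be affinely independent points, let T = conv{p₀,p₁,p₂} be the triangle they span, and let g : T → ℝ be a continuous concave function. Then (1/vol(T))·∫_T g dA ≥ (g(p₀) + g(p₁) + g(p₂))/3, with equality if and only if g is affine on T. -/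
open MeasureTheory

noncomputable section

/-- `g` is affine on `D`: restriction of a linear map plus a constant. -/
def IsAffineOn (D : Set (ℝ × ℝ)) (g : ℝ × ℝ → ℝ) : Prop :=
  ∃ (l : (ℝ × ℝ) →ₗ[ℝ] ℝ) (c : ℝ), ∀ x ∈ D, g x = l x + c

open Set

namespace TriAux


def S : Set (ℝ × ℝ) := {p | 0 ≤ p.1 ∧ 0 ≤ p.2 ∧ p.1 + p.2 ≤ 1}

lemma convex_S : Convex ℝ S := by
  rintro x ⟨hx1, hx2, hx3⟩ y ⟨hy1, hy2, hy3⟩ a b ha hb hab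
  refine ⟨?_, ?_, ?_⟩ <;>
    simp only [Prod.fst_add, Prod.snd_add, Prod.smul_fst, Prod.smul_snd, smul_eq_mul] <;>
    nlinarith

lemma S_eq : S = convexHull ℝ {((0:ℝ),(0:ℝ)), (1,0), (0,1)} := by
  apply Subset.antisymm
  · rintro p ⟨h1, h2, h3⟩
    have hmem := Finset.centerMass_mem_convexHull (Finset.univ : Finset (Fin 3))
      (w := ![1 - p.1 - p.2, p.1, p.2]) (z := ![((0:ℝ),(0:ℝ)), (1,0), (0,1)]) (s := {((0:ℝ),(0:ℝ)), (1,0), (0,1)})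
      (by intro i _; fin_cases i <;> simp <;> linarith)
      (by simp [Fin.sum_univ_three]; ring_nf; linarith)
      (by intro i _; fin_cases i <;> simp)
    have : Finset.univ.centerMass ![1 - p.1 - p.2, p.1, p.2] ![((0:ℝ),(0:ℝ)), (1,0), (0,1)] = p := by
      rw [Finset.centerMass_eq_of_sum_1]
      · simp [Fin.sum_univ_three, Prod.ext_iff]
      · simp [Fin.sum_univ_three]; ring
    rwa [this] at hmem
  · apply convexHull_min _ convex_S
    rintro q (rfl | rfl | rfl) <;> refine ⟨by norm_num, by norm_num, by norm_num⟩

lemma isCompact_S : IsCompact S := by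
  rw [S_eq]; exact (Set.toFinite _).isCompact_convexHull ℝ

lemma measurableSet_S : MeasurableSet S := isCompact_S.isClosed.measurableSet



lemma integral_S (f : ℝ × ℝ → ℝ) (hf : Continuous f) :
    ∫ p in S, f p = ∫ x in Icc (0:ℝ) 1, ∫ y in Icc (0:ℝ) (1 - x), f (x, y) := by
  have hint : IntegrableOn f S := hf.continuousOn.integrableOn_compact isCompact_S
  have hind : Integrable (S.indicator f) := (integrable_indicator_iff measurableSet_S).2 hint
  rw [← integral_indicator measurableSet_S]
  rw [show (volume : Measure (ℝ × ℝ)) = (volume.prod volume) from Measure.volume_eq_prod ℝ ℝ]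
  rw [MeasureTheory.integral_prod _ (by rwa [← Measure.volume_eq_prod])]
  rw [← integral_indicator measurableSet_Icc]
  apply integral_congr_ae
  filter_upwards with x
  by_cases hx : x ∈ Icc (0:ℝ) 1
  · rw [indicator_of_mem hx]
    have h : ∀ y, S.indicator f (x, y) = (Icc 0 (1 - x)).indicator (fun y => f (x, y)) y := by
      intro y
      by_cases hy : y ∈ Icc (0:ℝ) (1 - x)
      · rw [indicator_of_mem hy, indicator_of_mem]
        exact ⟨hx.1, hy.1, by linarith [hy.2]⟩
      · rw [indicator_of_notMem hy, indicator_of_notMem]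
        rintro ⟨-, hm2, hm3⟩
        exact hy ⟨hm2, by linarith⟩
    simp_rw [h]
    exact integral_indicator measurableSet_Icc
  · rw [indicator_of_notMem hx]
    have h : ∀ y, S.indicator f (x, y) = 0 := by
      intro y
      apply indicator_of_notMem
      rintro ⟨hm1, hm2, hm3⟩
      exact hx ⟨hm1, by linarith⟩
    simp [h]

lemma integral_S_affine (c a b : ℝ) :
    ∫ p in S, (c + a * p.1 + b * p.2) = c / 2 + a / 6 + b / 6 := by
  rw [integral_S _ (by continuity)]
  have inner : EqOn (fun x => ∫ y in Icc (0:ℝ) (1 - x), (c + a * x + b * y))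
      (fun x => (c + a * x) * (1 - x) + b / 2 * (1 - x) ^ 2) (Icc (0:ℝ) 1) := by
    intro x hx
    have hle : (0:ℝ) ≤ 1 - x := by linarith [hx.2]
    simp only
    rw [integral_Icc_eq_integral_Ioc, ← intervalIntegral.integral_of_le hle]
    have key : ∀ y ∈ Set.uIcc (0:ℝ) (1 - x),
        HasDerivAt (fun y => (c + a * x) * y + b / 2 * y ^ 2) (c + a * x + b * y) y := by
      intro y _
      have h1 := ((hasDerivAt_id y).const_mul (c + a * x)).add
        ((hasDerivAt_pow 2 y).const_mul (b / 2))
      exact h1.congr_deriv (by simp; ring)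
    rw [intervalIntegral.integral_eq_sub_of_hasDerivAt key
      (Continuous.intervalIntegrable (by continuity) _ _)]
    ring
  rw [setIntegral_congr_fun measurableSet_Icc inner]
  rw [integral_Icc_eq_integral_Ioc, ← intervalIntegral.integral_of_le (by norm_num : (0:ℝ) ≤ 1)]
  have key : ∀ x ∈ Set.uIcc (0:ℝ) 1,
      HasDerivAt (fun x => (c + b / 2) * x + (a - c - b) / 2 * x ^ 2 + (b / 2 - a) / 3 * x ^ 3)
        ((c + a * x) * (1 - x) + b / 2 * (1 - x) ^ 2) x := by
    intro x _
    have h1 := (((hasDerivAt_id x).const_mul (c + b / 2)).add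
      ((hasDerivAt_pow 2 x).const_mul ((a - c - b) / 2))).add
      ((hasDerivAt_pow 3 x).const_mul ((b / 2 - a) / 3))
    exact h1.congr_deriv (by simp; ring)
  rw [intervalIntegral.integral_eq_sub_of_hasDerivAt key
    (Continuous.intervalIntegrable (by continuity) _ _)]
  ring



lemma lindep {p₀ p₁ p₂ : ℝ × ℝ} (hindep : AffineIndependent ℝ ![p₀, p₁, p₂]) :
    LinearIndependent ℝ ![p₁ - p₀, p₂ - p₀] := by
  rw [LinearIndependent.pair_iff]
  intro s t hst
  have hsum : ∑ e ∈ Finset.univ, (![-(s+t), s, t] : Fin 3 → ℝ) e • (![p₀, p₁, p₂] : Fin 3 → ℝ × ℝ) e = 0 := by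
    simp only [Fin.sum_univ_three, Matrix.cons_val_zero, Matrix.cons_val_one, Matrix.head_cons,
      Matrix.cons_val_two, Matrix.tail_cons]
    have h0 : s • (p₁ - p₀) + t • (p₂ - p₀) = 0 := hst
    linear_combination (norm := module) h0
  have h := affineIndependent_iff.1 hindep Finset.univ ![-(s+t), s, t]
    (by simp [Fin.sum_univ_three]) hsum
  exact ⟨by simpa using h 1 (Finset.mem_univ _), by simpa using h 2 (Finset.mem_univ _)⟩

lemma key (p₀ p₁ p₂ : ℝ × ℝ) (hindep : AffineIndependent ℝ ![p₀, p₁, p₂]) :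
    0 < (volume (convexHull ℝ {p₀, p₁, p₂})).toReal ∧
    ∀ (l : (ℝ × ℝ) →ₗ[ℝ] ℝ) (c : ℝ),
      ∫ x in convexHull ℝ {p₀, p₁, p₂}, (l x + c) =
        (volume (convexHull ℝ {p₀, p₁, p₂})).toReal *
          (((l p₀ + c) + (l p₁ + c) + (l p₂ + c)) / 3) := by
  have hli := lindep hindep
  set u := p₁ - p₀ with hu
  set v := p₂ - p₀ with hv
  set L : (ℝ × ℝ) →ₗ[ℝ] (ℝ × ℝ) :=
    ((LinearMap.fst ℝ ℝ ℝ).smulRight u + (LinearMap.snd ℝ ℝ ℝ).smulRight v) with hLdef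
  have hL : ∀ q : ℝ × ℝ, L q = q.1 • u + q.2 • v := fun q => rfl
  have hLinj : Function.Injective L := by
    rw [← LinearMap.ker_eq_bot]
    apply LinearMap.ker_eq_bot'.mpr
    intro m hm
    obtain ⟨h1, h2⟩ := (LinearIndependent.pair_iff.1 hli) m.1 m.2 ((hL m) ▸ hm)
    exact Prod.ext h1 h2
  have hbij : Function.Bijective L := ⟨hLinj, (LinearMap.injective_iff_surjective).1 hLinj⟩
  have hdet : L.det ≠ 0 := by
    have := (LinearEquiv.ofBijective L hbij).isUnit_det'
    exact this.ne_zero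
  set d := |L.det| with hd
  have hdpos : 0 < d := abs_pos.2 hdet
  set φ : (ℝ × ℝ) →ᵃ[ℝ] (ℝ × ℝ) := AffineMap.const ℝ (ℝ × ℝ) p₀ + L.toAffineMap with hφdef
  have hφ : ∀ q, φ q = p₀ + L q := fun q => rfl
  have himg : φ '' S = convexHull ℝ {p₀, p₁, p₂} := by
    rw [S_eq, AffineMap.image_convexHull]
    congr 1
    rw [show ({((0:ℝ),(0:ℝ)), (1,0), (0,1)} : Set (ℝ × ℝ)) = {((0:ℝ),(0:ℝ)), ((1:ℝ),(0:ℝ)), ((0:ℝ),(1:ℝ))} from rfl]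
    rw [image_insert_eq, image_insert_eq, image_singleton]
    have e0 : φ (0, 0) = p₀ := by rw [hφ, hL]; simp
    have e1 : φ (1, 0) = p₁ := by rw [hφ, hL]; simp [hu]
    have e2 : φ (0, 1) = p₂ := by rw [hφ, hL]; simp [hv]
    rw [e0, e1, e2]
  have hvol : volume (convexHull ℝ {p₀, p₁, p₂}) = ENNReal.ofReal d * volume S := by
    rw [← himg]
    have himg2 : φ '' S = (fun x => p₀ + x) '' (L '' S) := by
      rw [image_image]; exact image_congr fun q _ => hφ q
    rw [himg2]
    rw [show (fun x => p₀ + x) '' (L '' S) = (fun x => -p₀ + x) ⁻¹' (L '' S) from ?_]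
    · rw [measure_preimage_add, Measure.addHaar_image_linearMap]
    · rw [Set.image_add_left]
  have hvolS : (volume S).toReal = 1 / 2 := by
    have h1 := integral_S_affine 1 0 0
    simp only [zero_mul, add_zero, mul_zero] at h1
    rw [setIntegral_const] at h1
    simpa [Measure.real] using h1
  have hvolT : (volume (convexHull ℝ {p₀, p₁, p₂})).toReal = d / 2 := by
    rw [hvol, ENNReal.toReal_mul, ENNReal.toReal_ofReal hdpos.le, hvolS]; ring
  refine ⟨by rw [hvolT]; positivity, ?_⟩
  intro l c
  have hcov : ∫ x in convexHull ℝ {p₀, p₁, p₂}, (l x + c)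
      = ∫ q in S, d • (l (φ q) + c) := by
    rw [← himg]
    have hderiv : ∀ x ∈ S, HasFDerivWithinAt (⇑φ) L.toContinuousLinearMap S x := fun x _ => by
      exact ((L.toContinuousLinearMap.hasFDerivAt).const_add p₀).hasFDerivWithinAt
    have hinj : InjOn (⇑φ) S := fun x _ y _ h => hLinj (add_left_cancel ((hφ x) ▸ (hφ y) ▸ h))
    rw [integral_image_eq_integral_abs_det_fderiv_smul volume measurableSet_S hderiv hinj]
    refine setIntegral_congr_fun measurableSet_S fun q _ => ?_
    congr 2
  rw [hcov]
  have hptwise : ∀ q : ℝ × ℝ, d • (l (φ q) + c)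
      = d * ((l p₀ + c) + (l u) * q.1 + (l v) * q.2) := by
    intro q
    rw [hφ q, hL q]
    simp only [map_add, l.map_smul, smul_eq_mul]
    ring
  simp_rw [hptwise]
  rw [integral_const_mul, integral_S_affine (l p₀ + c) (l u) (l v), hvolT]
  have h1 : l u = l p₁ - l p₀ := by rw [hu, map_sub]
  have h2 : l v = l p₂ - l p₀ := by rw [hv, map_sub]
  rw [h1, h2]; ring


end TriAux

open TriAux in
/-- Trapezoid estimate for a triangle: for a continuous concave function `g` on a
nondegenerate triangle `T = conv{p₀,p₁,p₂}`, the average of `g` over `T` is at least the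
average of the vertex values, with equality iff `g` is affine on `T`. -/
theorem triangle_trapezoid (p₀ p₁ p₂ : ℝ × ℝ)
    (hindep : AffineIndependent ℝ ![p₀, p₁, p₂])
    (T : Set (ℝ × ℝ)) (hT : T = convexHull ℝ {p₀, p₁, p₂})
    (g : ℝ × ℝ → ℝ) (hg : ContinuousOn g T) (hconc : ConcaveOn ℝ T g) :
    ((volume T).toReal⁻¹ * (∫ x in T, g x) ≥ (g p₀ + g p₁ + g p₂) / 3) ∧
      ((volume T).toReal⁻¹ * (∫ x in T, g x) = (g p₀ + g p₁ + g p₂) / 3 ↔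
        IsAffineOn T g) := by
  obtain ⟨hvolpos, hkey⟩ := key p₀ p₁ p₂ hindep
  rw [← hT] at hvolpos hkey
  have hp₀ : p₀ ∈ T := hT ▸ subset_convexHull ℝ _ (by simp)
  have hp₁ : p₁ ∈ T := hT ▸ subset_convexHull ℝ _ (by simp)
  have hp₂ : p₂ ∈ T := hT ▸ subset_convexHull ℝ _ (by simp)
  have hTconv : Convex ℝ T := hT ▸ convex_convexHull ℝ _
  have hTcomp : IsCompact T := hT ▸ (Set.toFinite _).isCompact_convexHull ℝ
  have hTmeas : MeasurableSet T := hTcomp.isClosed.measurableSet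
  have hIntg : IntegrableOn g T := hg.integrableOn_compact hTcomp
  -- the affine interpolant
  have hli := lindep hindep
  set e : Module.Basis (Fin 2) ℝ (ℝ × ℝ) :=
    basisOfLinearIndependentOfCardEqFinrank hli (by simp) with he
  set l₀ : (ℝ × ℝ) →ₗ[ℝ] ℝ := e.constr ℝ ![g p₁ - g p₀, g p₂ - g p₀] with hl₀def
  have hl₀u : l₀ (p₁ - p₀) = g p₁ - g p₀ := by
    have h0 : e 0 = p₁ - p₀ := by
      rw [he, coe_basisOfLinearIndependentOfCardEqFinrank]; rfl
    rw [← h0, hl₀def]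
    simpa using e.constr_basis ℝ ![g p₁ - g p₀, g p₂ - g p₀] 0
  have hl₀v : l₀ (p₂ - p₀) = g p₂ - g p₀ := by
    have h1 : e 1 = p₂ - p₀ := by
      rw [he, coe_basisOfLinearIndependentOfCardEqFinrank]; rfl
    rw [← h1, hl₀def]
    simpa using e.constr_basis ℝ ![g p₁ - g p₀, g p₂ - g p₀] 1
  obtain ⟨c₀, hc₀⟩ : ∃ c : ℝ, c = g p₀ - l₀ p₀ := ⟨_, rfl⟩
  obtain ⟨A, hA⟩ : ∃ A : (ℝ × ℝ) → ℝ, A = fun x => l₀ x + c₀ := ⟨_, rfl⟩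
  have hA₀ : A p₀ = g p₀ := by rw [hA]; simp [hc₀]
  have hA₁ : A p₁ = g p₁ := by
    have h := hl₀u; rw [map_sub] at h
    rw [hA]; simp only [hc₀]; linarith
  have hA₂ : A p₂ = g p₂ := by
    have h := hl₀v; rw [map_sub] at h
    rw [hA]; simp only [hc₀]; linarith
  have hAcont : Continuous A := by
    rw [hA]; exact (l₀.continuous_of_finiteDimensional).add continuous_const
  have hIntA : IntegrableOn A T := hAcont.continuousOn.integrableOn_compact hTcomp
  have haff : ∀ (lin : (ℝ × ℝ) →ₗ[ℝ] ℝ) (cc : ℝ), ConvexOn ℝ T fun x => lin x + cc := by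
    intro lin cc
    refine ⟨hTconv, fun x _ y _ a b _ _ hab => le_of_eq ?_⟩
    simp only [map_add, lin.map_smul, smul_eq_mul]
    have hb : b = 1 - a := by linarith
    subst hb
    ring
  have hAconvex : ConvexOn ℝ T A := hA ▸ haff l₀ c₀
  have hAleg : ∀ x ∈ T, A x ≤ g x := by
    intro x hx
    have hsub : ConcaveOn ℝ T (g - A) := hconc.sub hAconvex
    obtain ⟨y, hy, hle⟩ := hsub.exists_le_of_mem_convexHull
      (hT ▸ subset_convexHull ℝ ({p₀, p₁, p₂} : Set (ℝ × ℝ))) (hT ▸ hx)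
    have hy0 : (g - A) y = 0 := by
      rcases hy with rfl | rfl | rfl <;> simp [hA₀, hA₁, hA₂]
    rw [hy0] at hle
    simpa [sub_nonneg] using hle
  have hIA : ∫ x in T, A x = (volume T).toReal * ((g p₀ + g p₁ + g p₂) / 3) := by
    have h := hkey l₀ c₀
    have e₀ : l₀ p₀ + c₀ = g p₀ := by rw [hA] at hA₀; exact hA₀
    have e₁ : l₀ p₁ + c₀ = g p₁ := by rw [hA] at hA₁; exact hA₁
    have e₂ : l₀ p₂ + c₀ = g p₂ := by rw [hA] at hA₂; exact hA₂
    rw [e₀, e₁, e₂] at h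
    rw [hA]
    exact h
  have hints : ∫ x in T, A x ≤ ∫ x in T, g x :=
    setIntegral_mono_on hIntA hIntg hTmeas hAleg
  have havg : (g p₀ + g p₁ + g p₂) / 3 = (volume T).toReal⁻¹ * ∫ x in T, A x := by
    rw [hIA, ← mul_assoc, inv_mul_cancel₀ hvolpos.ne', one_mul]
  constructor
  · rw [ge_iff_le, havg]
    exact mul_le_mul_of_nonneg_left hints (inv_nonneg.2 hvolpos.le)
  constructor
  · intro heq
    have h1 : ∫ x in T, g x = ∫ x in T, A x := by
      have h2 : (volume T).toReal⁻¹ * ∫ x in T, g x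
          = (volume T).toReal⁻¹ * ∫ x in T, A x := heq.trans havg
      exact mul_left_cancel₀ (inv_ne_zero hvolpos.ne') h2
    have hzero : ∀ x ∈ T, g x = A x := by
      by_contra hcon
      push_neg at hcon
      obtain ⟨x, hx, hne⟩ := hcon
      have hgx : A x < g x := lt_of_le_of_ne (hAleg x hx) fun h => hne h.symm
      have hrange : Set.range ![p₀, p₁, p₂] = {p₀, p₁, p₂} := by
        ext w
        simp [Matrix.range_cons, Matrix.range_empty]
        tauto
      have hin : (interior T).Nonempty := by
        rw [hTconv.interior_nonempty_iff_affineSpan_eq_top, hT, affineSpan_convexHull, ← hrange]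
        exact hindep.affineSpan_eq_top_iff_card_eq_finrank_add_one.2 (by simp)
      obtain ⟨z₀, hz₀⟩ := hin
      obtain ⟨z, hz⟩ : ∃ z : ℝ × ℝ, z = (1/2 : ℝ) • x + (1/2 : ℝ) • z₀ := ⟨_, rfl⟩
      have hzint : z ∈ interior T := by
        rw [hz]
        exact hTconv.combo_self_interior_mem_interior hx hz₀ (by norm_num) (by norm_num)
          (by norm_num)
      have hzT : z ∈ T := interior_subset hzint
      have hz₀T : z₀ ∈ T := interior_subset hz₀
      have hAz : A z = (1/2) * A x + (1/2) * A z₀ := by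
        simp only [hA, hz, map_add, l₀.map_smul, smul_eq_mul]
        ring
      have hgz : (1/2 : ℝ) * g x + (1/2 : ℝ) * g z₀ ≤ g z := by
        have h4 := hconc.2 hx hz₀T (by norm_num : (0:ℝ) ≤ 1/2) (by norm_num : (0:ℝ) ≤ 1/2)
          (by norm_num : (1/2 : ℝ) + 1/2 = 1)
        rw [← hz] at h4
        simpa [smul_eq_mul] using h4
      have hposz : 0 < g z - A z := by
        have h3 := hAleg z₀ hz₀T
        rw [hAz]; linarith
      have hconth : ContinuousOn (fun w => g w - A w) T := hg.sub hAcont.continuousOn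
      have hTz : T ∈ nhds z := mem_interior_iff_mem_nhds.1 hzint
      have hcA : ContinuousAt (fun w => g w - A w) z := hconth.continuousAt hTz
      have hev : ∀ᶠ w in nhds z, (g z - A z) / 2 < g w - A w :=
        hcA.eventually (eventually_gt_nhds (by linarith))
      obtain ⟨ε, hεpos, hball⟩ := Metric.mem_nhds_iff.1 (Filter.inter_mem hTz hev)
      have hIntsub : ∫ w in Metric.ball z ε, (g w - A w) ≤ ∫ w in T, (g w - A w) := by
        refine setIntegral_mono_set (hIntg.sub hIntA) ?_
          (HasSubset.Subset.eventuallyLE fun w hw => (hball hw).1)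
        exact (ae_restrict_iff' hTmeas).2
          (Filter.Eventually.of_forall fun w hw => sub_nonneg.2 (hAleg w hw))
      have hlow : (g z - A z) / 2 * (volume (Metric.ball z ε)).toReal
          ≤ ∫ w in Metric.ball z ε, (g w - A w) := by
        have := setIntegral_ge_of_const_le measurableSet_ball measure_ball_lt_top.ne
          (fun w hw => ((hball hw).2).le)
          (MeasureTheory.IntegrableOn.mono_set (hIntg.sub hIntA) fun w hw => (hball hw).1)
        simpa [Measure.real, smul_eq_mul, mul_comm] using this
      have hballpos : 0 < (volume (Metric.ball z ε)).toReal :=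
        ENNReal.toReal_pos (Metric.measure_ball_pos volume z hεpos).ne' measure_ball_lt_top.ne
      have hzero' : ∫ w in T, (g w - A w) = 0 := by
        rw [integral_sub hIntg hIntA, h1, sub_self]
      have hprod : 0 < (g z - A z) / 2 * (volume (Metric.ball z ε)).toReal :=
        mul_pos (by linarith) hballpos
      linarith
    exact ⟨l₀, c₀, fun x hx => by rw [hzero x hx, hA]⟩
  · rintro ⟨l, c, hgl⟩
    have hgc : ∫ x in T, g x = ∫ x in T, (l x + c) :=
      setIntegral_congr_fun hTmeas fun x hx => hgl x hx
    rw [hgc, hkey l c, ← hgl p₀ hp₀, ← hgl p₁ hp₁, ← hgl p₂ hp₂,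
      ← mul_assoc, inv_mul_cancel₀ hvolpos.ne', one_mul]
end
end
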